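/- Let Z ⊆ [0,1] be a compact set with zero Lebesgue measure. Suppose (Vⱼ)_{j=1}^n is a finite cover of Z by intervals that are open in [0,1]. Then there exists a finite cover (V′ⱼ) of Z by pairwise disjoint intervals open in [0,1], such that each V′ⱼ is contained in some Vᵢ (and in particular ∑ⱼ |V′ⱼ|^α ≤ ∑ᵢ |Vᵢ|^α for any α > 0, where |·| denotes interval length). -/

import Mathlib

open Set MeasureTheory

/-- An interval which is open as a subset of `[0,1]`, i.e. of the form
`[0,1] ∩ (a,b)` (this includes intervals like `[0,b)` and `(a,1]`). -/
def IsOpenSubinterval (V : Set ℝ) : Prop :=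
  ∃ a b : ℝ, V = Set.Icc (0 : ℝ) 1 ∩ Set.Ioo a b

lemma IsOpenSubinterval.inter_Iio {V : Set ℝ} (h : IsOpenSubinterval V) (s : ℝ) :
    IsOpenSubinterval (V ∩ Set.Iio s) := by
  obtain ⟨a, b, rfl⟩ := h
  exact ⟨a, min b s, by rw [inter_assoc, Set.Ioo_inter_Iio]⟩

lemma key : ∀ (n : ℕ) (Z : Set ℝ), Z ⊆ Set.Icc (0:ℝ) 1 → IsCompact Z →
    MeasureTheory.volume Z = 0 → ∀ V : Fin n → Set ℝ, (∀ i, IsOpenSubinterval (V i)) →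
    Z ⊆ ⋃ i, V i →
    ∃ (m : ℕ) (V' : Fin m → Set ℝ) (ι : Fin m → Fin n),
      (∀ j, IsOpenSubinterval (V' j)) ∧
      (Pairwise (Function.onFun Disjoint V')) ∧
      (Z ⊆ ⋃ j, V' j) ∧
      Function.Injective ι ∧
      (∀ j, V' j ⊆ V (ι j)) := by
  intro n
  induction n with
  | zero =>
    intro Z hZsub hZcomp hZnull V hV hcover
    refine ⟨0, Fin.elim0, Fin.elim0, fun j => j.elim0, fun j => j.elim0, ?_,
      fun j => j.elim0, fun j => j.elim0⟩
    intro z hz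
    rcases Set.mem_iUnion.mp (hcover hz) with ⟨i, _⟩
    exact i.elim0
  | succ n IH =>
    intro Z hZsub hZcomp hZnull V hV hcover
    rcases Set.eq_empty_or_nonempty Z with rfl | hZne
    · exact ⟨0, Fin.elim0, Fin.elim0, fun j => j.elim0, fun j => j.elim0,
        by simp, fun j => j.elim0, fun j => j.elim0⟩
    choose a b hab using hV
    set x := sSup Z with hx
    have hxZ : x ∈ Z := hZcomp.sSup_mem hZne
    have hle : ∀ z ∈ Z, z ≤ x := fun z hz => le_csSup hZcomp.bddAbove hz
    rcases Set.mem_iUnion.mp (hcover hxZ) with ⟨i, hxV⟩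
    rw [hab i] at hxV
    have hax : a i < x := hxV.2.1
    have hxb : x < b i := hxV.2.2
    -- points of Z at or below a i are covered by other intervals
    have hlow : ∀ z ∈ Z, z ≤ a i → ∃ j, j ≠ i ∧ z ∈ V j := by
      intro z hz hza
      rcases Set.mem_iUnion.mp (hcover hz) with ⟨j, hj⟩
      refine ⟨j, fun hji => ?_, hj⟩
      subst hji
      rw [hab j] at hj
      exact absurd hj.2.1 (not_lt.mpr hza)
    -- find the cut point s
    have hs : ∃ s, a i < s ∧ s < b i ∧ s ∉ Z ∧
        ∀ z ∈ Z, z ≤ s → ∃ j, j ≠ i ∧ z ∈ V j := by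
      by_cases h1 : ∃ δ > 0, Z ∩ Set.Ioc (a i) (a i + δ) = ∅
      · obtain ⟨δ, hδ, hδe⟩ := h1
        have hmin : 0 < min δ (x - a i) := lt_min hδ (by linarith)
        refine ⟨a i + min δ (x - a i) / 2, by linarith, ?_, ?_, ?_⟩
        · have : a i + min δ (x - a i) / 2 ≤ a i + (x - a i) / 2 := by
            have := min_le_right δ (x - a i); linarith
          linarith
        · intro hsZ
          have : a i + min δ (x - a i) / 2 ∈ Z ∩ Set.Ioc (a i) (a i + δ) := by
            refine ⟨hsZ, by linarith, ?_⟩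
            have := min_le_left δ (x - a i); linarith
          rw [hδe] at this; exact this
        · intro z hz hzs
          rcases le_or_gt z (a i) with h | h
          · exact hlow z hz h
          · exfalso
            have : z ∈ Z ∩ Set.Ioc (a i) (a i + δ) := by
              refine ⟨hz, h, ?_⟩
              have := min_le_left δ (x - a i); linarith
            rw [hδe] at this; exact this
      · push_neg at h1
        have haiZ : a i ∈ Z := by
          have : a i ∈ closure Z := by
            rw [Real.mem_closure_iff]
            intro ε hε
            obtain ⟨z, hzZ, hz⟩ := h1 (ε / 2) (by positivity)
            exact ⟨z, hzZ, by rw [abs_of_pos (by linarith [hz.1])]; linarith [hz.2]⟩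
          rwa [hZcomp.isClosed.closure_eq] at this
        obtain ⟨j, hji, hjV⟩ := hlow (a i) haiZ le_rfl
        rw [hab j] at hjV
        set e := min (b j) (b i) with he
        have hae : a i < e := lt_min hjV.2.2 (lt_trans hax hxb)
        have : ¬ (Set.Ioo (a i) e ⊆ Z) := by
          intro hsub
          have h0 : MeasureTheory.volume (Set.Ioo (a i) e) = 0 :=
            le_antisymm (hZnull ▸ measure_mono hsub) zero_le
          rw [Real.volume_Ioo] at h0
          have := ENNReal.ofReal_eq_zero.mp h0
          linarith
        obtain ⟨s, hsIoo, hsZ⟩ := Set.not_subset.mp this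
        refine ⟨s, hsIoo.1, lt_of_lt_of_le hsIoo.2 (min_le_right _ _), hsZ, ?_⟩
        intro z hz hzs
        rcases le_or_gt z (a i) with h | h
        · exact hlow z hz h
        · refine ⟨j, hji, ?_⟩
          rw [hab j]
          exact ⟨hZsub hz, lt_trans hjV.2.1 h,
            lt_of_le_of_lt hzs (lt_of_lt_of_le hsIoo.2 (min_le_left _ _))⟩
    obtain ⟨s, has, hsb, hsZ, hscov⟩ := hs
    -- recursive call on Z' = Z ∩ Iic s
    set Z' := Z ∩ Set.Iic s with hZ'
    have hZ'cov : Z' ⊆ ⋃ k : Fin n, V (i.succAbove k) := by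
      rintro z ⟨hz, hzs⟩
      obtain ⟨j, hji, hjV⟩ := hscov z hz hzs
      obtain ⟨k, hk⟩ := Fin.exists_succAbove_eq hji
      exact Set.mem_iUnion.mpr ⟨k, hk ▸ hjV⟩
    obtain ⟨m, V₀, ι₀, hV₀sub, hV₀dis, hV₀cov, hι₀inj, hV₀V⟩ :=
      IH Z' (fun z hz => hZsub hz.1) (hZcomp.inter_right isClosed_Iic)
        (le_antisymm (hZnull ▸ measure_mono Set.inter_subset_left) zero_le)
        (fun k => V (i.succAbove k)) (fun k => ⟨a _, b _, hab _⟩) hZ'cov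
    -- assemble
    set W : Set ℝ := Set.Icc 0 1 ∩ Set.Ioo s (b i) with hW
    refine ⟨m + 1, Fin.cases W (fun k => V₀ k ∩ Set.Iio s),
      Fin.cases i (fun k => i.succAbove (ι₀ k)), ?_, ?_, ?_, ?_, ?_⟩
    · intro j
      rcases Fin.eq_zero_or_eq_succ j with rfl | ⟨k, rfl⟩
      · simpa using ⟨s, b i, rfl⟩
      · simpa using (hV₀sub k).inter_Iio s
    · have hd : ∀ k : Fin m, Disjoint W (V₀ k ∩ Set.Iio s) :=
        fun k => Set.disjoint_left.mpr
          (fun y hy hy' => absurd hy'.2 (not_lt.mpr (le_of_lt hy.2.1)))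
      intro p q hpq
      rcases Fin.eq_zero_or_eq_succ p with rfl | ⟨p', rfl⟩ <;>
        rcases Fin.eq_zero_or_eq_succ q with rfl | ⟨q', rfl⟩
      · exact absurd rfl hpq
      · simpa [Function.onFun] using hd q'
      · simpa [Function.onFun] using (hd p').symm
      · have hpq' : p' ≠ q' := fun h => hpq (by rw [h])
        simpa [Function.onFun] using
          ((hV₀dis hpq').mono Set.inter_subset_left Set.inter_subset_left)
    · intro z hz
      rcases lt_or_ge s z with h | h
      · exact Set.mem_iUnion.mpr ⟨0, by
          simpa using ⟨hZsub hz, h, lt_of_le_of_lt (hle z hz) hxb⟩⟩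
      · have hzlt : z < s := lt_of_le_of_ne h (fun hzs => hsZ (hzs ▸ hz))
        obtain ⟨k, hk⟩ := Set.mem_iUnion.mp (hV₀cov ⟨hz, h⟩)
        exact Set.mem_iUnion.mpr ⟨k.succ, by simpa using ⟨hk, hzlt⟩⟩
    · intro p q hpq
      rcases Fin.eq_zero_or_eq_succ p with rfl | ⟨p', rfl⟩ <;>
        rcases Fin.eq_zero_or_eq_succ q with rfl | ⟨q', rfl⟩
      · rfl
      · simp only [Fin.cases_zero, Fin.cases_succ] at hpq
        exact absurd hpq.symm (Fin.succAbove_ne i (ι₀ q'))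
      · simp only [Fin.cases_zero, Fin.cases_succ] at hpq
        exact absurd hpq (Fin.succAbove_ne i (ι₀ p'))
      · simp only [Fin.cases_succ] at hpq
        rw [hι₀inj (Fin.succAbove_right_injective hpq)]
    · intro j
      rcases Fin.eq_zero_or_eq_succ j with rfl | ⟨k, rfl⟩
      · simp only [Fin.cases_zero]
        rw [hab i]
        exact Set.inter_subset_inter_right _
          (Set.Ioo_subset_Ioo (le_of_lt has) le_rfl)
      · simp only [Fin.cases_succ]
        exact Set.Subset.trans Set.inter_subset_left (hV₀V k)

theorem stmt_11 (Z : Set ℝ) (hZsub : Z ⊆ Set.Icc (0 : ℝ) 1) (hZcomp : IsCompact Z)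
    (hZnull : MeasureTheory.volume Z = 0)
    (n : ℕ) (V : Fin n → Set ℝ) (hV : ∀ i, IsOpenSubinterval (V i))
    (hcover : Z ⊆ ⋃ i, V i) :
    ∃ (m : ℕ) (V' : Fin m → Set ℝ) (ι : Fin m → Fin n),
      (∀ j, IsOpenSubinterval (V' j)) ∧
      (Pairwise (Function.onFun Disjoint V')) ∧
      (Z ⊆ ⋃ j, V' j) ∧
      Function.Injective ι ∧
      (∀ j, V' j ⊆ V (ι j)) ∧
      (∀ α : ℝ, 0 < α →
        ∑ j, Metric.diam (V' j) ^ α ≤ ∑ i, Metric.diam (V i) ^ α) := by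
  obtain ⟨m, V', ι, h1, h2, h3, h4, h5⟩ := key n Z hZsub hZcomp hZnull V hV hcover
  refine ⟨m, V', ι, h1, h2, h3, h4, h5, ?_⟩
  intro α hα
  have hbd : ∀ i, Bornology.IsBounded (V i) := by
    intro i
    obtain ⟨a, b, hab⟩ := hV i
    exact (Metric.isBounded_Icc (0:ℝ) 1).subset (hab ▸ Set.inter_subset_left)
  have step1 : ∀ j, Metric.diam (V' j) ^ α ≤ Metric.diam (V (ι j)) ^ α := by
    intro j
    exact Real.rpow_le_rpow Metric.diam_nonneg
      (Metric.diam_mono (h5 j) (hbd (ι j))) (le_of_lt hα)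
  calc ∑ j, Metric.diam (V' j) ^ α
      ≤ ∑ j, Metric.diam (V (ι j)) ^ α := Finset.sum_le_sum (fun j _ => step1 j)
    _ = ∑ i ∈ Finset.univ.image ι, Metric.diam (V i) ^ α := by
        rw [Finset.sum_image (fun p _ q _ h => h4 h)]
    _ ≤ ∑ i, Metric.diam (V i) ^ α :=
        Finset.sum_le_sum_of_subset_of_nonneg (Finset.subset_univ _)
          (fun i _ _ => Real.rpow_nonneg Metric.diam_nonneg α)
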